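/- Let Φ : M_n(ℂ) → M_m(ℂ) be a linear map. Then Φ is CPDNN (i.e., for every k ∈ ℕ, (id_k ⊗ Φ) maps doubly nonnegative matrices in M_{kn} to doubly nonnegative matrices in M_{km}) if and only if its Choi matrix J(Φ) = Σ_{i,j=1}^n E_{ij} ⊗ Φ(E_{ij}) is a doubly nonnegative nm×nm matrix. -/

import Mathlib

open Matrix
open scoped ComplexOrder

/-- A complex matrix is completely positive if it is a finite sum of rank-one
matrices `x xᵀ` with `x` a real entrywise nonnegative vector (viewed in `ℂ`). -/
def IsCPMat {ι : Type*} [Fintype ι] (A : Matrix ι ι ℂ) : Prop :=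
  ∃ (s : ℕ) (x : Fin s → ι → ℝ), (∀ t i, 0 ≤ x t i) ∧
    ∀ i j, A i j = ((∑ t, x t i * x t j : ℝ) : ℂ)

/-- A complex matrix is doubly nonnegative if it is positive semidefinite and
every entry is a nonnegative real number. -/
def IsDNNMat {ι : Type*} [Fintype ι] (A : Matrix ι ι ℂ) : Prop :=
  A.PosSemidef ∧ ∀ i j, 0 ≤ (A i j).re ∧ (A i j).im = 0

/-- The map `id_k ⊗ Φ` acting blockwise: the `((a,p),(b,q))` entry of the output
is `Φ(X_{ab})_{pq}`, where `X_{ab}` is the `(a,b)` block of `X`. -/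
def idTensor {n m : ℕ} (Φ : Matrix (Fin n) (Fin n) ℂ →ₗ[ℂ] Matrix (Fin m) (Fin m) ℂ)
    (k : ℕ) (X : Matrix (Fin k × Fin n) (Fin k × Fin n) ℂ) :
    Matrix (Fin k × Fin m) (Fin k × Fin m) ℂ :=
  Matrix.of fun ap bq => Φ (Matrix.of fun i j => X (ap.1, i) (bq.1, j)) ap.2 bq.2

/-- `Φ` is completely positive as a linear map between matrix algebras. -/
def IsCPMap {n m : ℕ} (Φ : Matrix (Fin n) (Fin n) ℂ →ₗ[ℂ] Matrix (Fin m) (Fin m) ℂ) : Prop :=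
  ∀ (k : ℕ) (X : Matrix (Fin k × Fin n) (Fin k × Fin n) ℂ),
    X.PosSemidef → (idTensor Φ k X).PosSemidef

/-- `Φ` is trace-preserving. -/
def IsTP {n m : ℕ} (Φ : Matrix (Fin n) (Fin n) ℂ →ₗ[ℂ] Matrix (Fin m) (Fin m) ℂ) : Prop :=
  ∀ X, (Φ X).trace = X.trace

/-- `Φ` is CPCP: `id_k ⊗ Φ` maps completely positive matrices to completely
positive matrices for every `k`. -/
def IsCPCP {n m : ℕ} (Φ : Matrix (Fin n) (Fin n) ℂ →ₗ[ℂ] Matrix (Fin m) (Fin m) ℂ) : Prop :=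
  ∀ (k : ℕ) (X : Matrix (Fin k × Fin n) (Fin k × Fin n) ℂ),
    IsCPMat X → IsCPMat (idTensor Φ k X)

/-- `Φ` is CPDNN: `id_k ⊗ Φ` maps doubly nonnegative matrices to doubly
nonnegative matrices for every `k`. -/
def IsCPDNN {n m : ℕ} (Φ : Matrix (Fin n) (Fin n) ℂ →ₗ[ℂ] Matrix (Fin m) (Fin m) ℂ) : Prop :=
  ∀ (k : ℕ) (X : Matrix (Fin k × Fin n) (Fin k × Fin n) ℂ),
    IsDNNMat X → IsDNNMat (idTensor Φ k X)

/-- The Choi matrix `J(Φ) = Σ_{i,j} E_{ij} ⊗ Φ(E_{ij})`, with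
`((i,p),(j,q))` entry equal to `Φ(E_{ij})_{pq}`. -/
def choi {n m : ℕ} (Φ : Matrix (Fin n) (Fin n) ℂ →ₗ[ℂ] Matrix (Fin m) (Fin m) ℂ) :
    Matrix (Fin n × Fin m) (Fin n × Fin m) ℂ :=
  Matrix.of fun ip jq => Φ (Matrix.single ip.1 jq.1 1) ip.2 jq.2

section Aux

variable {n m : ℕ} (Φ : Matrix (Fin n) (Fin n) ℂ →ₗ[ℂ] Matrix (Fin m) (Fin m) ℂ)

lemma choi_apply_entry (M : Matrix (Fin n) (Fin n) ℂ) (p q : Fin m) :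
    Φ M p q = ∑ i, ∑ j, M i j * choi Φ (i, p) (j, q) := by
  conv_lhs => rw [Matrix.matrix_eq_sum_single M]
  simp only [map_sum, Matrix.sum_apply]
  refine Finset.sum_congr rfl fun i _ => Finset.sum_congr rfl fun j _ => ?_
  have h : Matrix.single i j (M i j) = M i j • Matrix.single i j 1 := by
    rw [Matrix.smul_single, smul_eq_mul, mul_one]
  rw [h, LinearMap.map_smul]
  simp [choi, Matrix.smul_apply]

lemma idTensor_entry (k : ℕ) (X : Matrix (Fin k × Fin n) (Fin k × Fin n) ℂ)
    (a b : Fin k) (p q : Fin m) :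
    idTensor Φ k X (a, p) (b, q) = ∑ i, ∑ j, X (a, i) (b, j) * choi Φ (i, p) (j, q) := by
  simp only [idTensor, Matrix.of_apply]
  rw [choi_apply_entry]
  simp

/-- Kraus operators built from a square root `B` of the Choi matrix. -/
def kraus {n m : ℕ} (B : Matrix (Fin n × Fin m) (Fin n × Fin m) ℂ) (k : ℕ)
    (t : Fin n × Fin m) : Matrix (Fin k × Fin m) (Fin k × Fin n) ℂ :=
  Matrix.of fun ap bi => if ap.1 = bi.1 then star (B t (bi.2, ap.2)) else 0

lemma sum4_comm {α β γ δ M : Type*} [Fintype α] [Fintype β] [Fintype γ] [Fintype δ]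
    [AddCommMonoid M] (f : α → β → γ → δ → M) :
    ∑ i, ∑ j, ∑ t1, ∑ t2, f i j t1 t2 = ∑ t1, ∑ t2, ∑ j, ∑ i, f i j t1 t2 := by
  calc ∑ i, ∑ j, ∑ t1, ∑ t2, f i j t1 t2
      = ∑ i, ∑ t1, ∑ j, ∑ t2, f i j t1 t2 :=
        Finset.sum_congr rfl fun i _ => Finset.sum_comm
    _ = ∑ t1, ∑ i, ∑ j, ∑ t2, f i j t1 t2 := Finset.sum_comm
    _ = ∑ t1, ∑ i, ∑ t2, ∑ j, f i j t1 t2 :=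
        Finset.sum_congr rfl fun t1 _ => Finset.sum_congr rfl fun i _ => Finset.sum_comm
    _ = ∑ t1, ∑ t2, ∑ i, ∑ j, f i j t1 t2 :=
        Finset.sum_congr rfl fun t1 _ => Finset.sum_comm
    _ = ∑ t1, ∑ t2, ∑ j, ∑ i, f i j t1 t2 :=
        Finset.sum_congr rfl fun t1 _ => Finset.sum_congr rfl fun t2 _ => Finset.sum_comm

lemma idTensor_eq_kraus_sum (k : ℕ) (X : Matrix (Fin k × Fin n) (Fin k × Fin n) ℂ)
    (B : Matrix (Fin n × Fin m) (Fin n × Fin m) ℂ) (hB : choi Φ = Bᴴ * B) :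
    idTensor Φ k X = ∑ t : Fin n × Fin m, kraus B k t * X * (kraus B k t)ᴴ := by
  ext ⟨a, p⟩ ⟨b, q⟩
  rw [idTensor_entry]
  simp only [Matrix.sum_apply, Matrix.mul_apply, Matrix.conjTranspose_apply, kraus,
    Matrix.of_apply, apply_ite (star : ℂ → ℂ), star_star, star_zero, ite_mul, mul_ite, zero_mul, mul_zero,
    Fintype.sum_prod_type, Finset.sum_ite_irrel, Finset.sum_const_zero,
    Finset.sum_ite_eq, Finset.mem_univ, if_true, hB]
  simp only [Finset.mul_sum, Finset.sum_mul]
  rw [sum4_comm]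
  refine Finset.sum_congr rfl fun t1 _ => Finset.sum_congr rfl fun t2 _ =>
    Finset.sum_congr rfl fun j _ => Finset.sum_congr rfl fun i _ => by ring

lemma nonneg_iff_dnn_entry (c : ℂ) : (0 ≤ c.re ∧ c.im = 0) ↔ 0 ≤ c := by
  rw [Complex.le_def]
  simp [eq_comm]

end Aux

/-- A linear map `Φ : Mₙ(ℂ) → Mₘ(ℂ)` is CPDNN if and only if its Choi matrix
is doubly nonnegative. -/
theorem stmt11 (n m : ℕ)
    (Φ : Matrix (Fin n) (Fin n) ℂ →ₗ[ℂ] Matrix (Fin m) (Fin m) ℂ) :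
    IsCPDNN Φ ↔ IsDNNMat (choi Φ) := by
  constructor
  · intro h
    -- apply to the "maximally entangled" matrix
    set X : Matrix (Fin n × Fin n) (Fin n × Fin n) ℂ :=
      Matrix.of fun ai bj => if ai.1 = ai.2 ∧ bj.1 = bj.2 then 1 else 0 with hXdef
    have hXD : IsDNNMat X := by
      constructor
      · have : X = (Matrix.of fun (_ : Unit) (ai : Fin n × Fin n) =>
            if ai.1 = ai.2 then (1 : ℂ) else 0)ᴴ *
            (Matrix.of fun (_ : Unit) (ai : Fin n × Fin n) =>
            if ai.1 = ai.2 then (1 : ℂ) else 0) := by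
          ext ⟨a, i⟩ ⟨b, j⟩
          simp only [Matrix.mul_apply, Matrix.conjTranspose_apply, Matrix.of_apply, hXdef,
            Finset.univ_unique, Finset.sum_singleton]
          by_cases h1 : a = i <;> by_cases h2 : b = j <;> simp [h1, h2]
        rw [this]
        exact Matrix.posSemidef_conjTranspose_mul_self _
      · intro ai bj
        simp only [hXdef, Matrix.of_apply]
        split_ifs <;> norm_num
    have := h n X hXD
    have hEq : idTensor Φ n X = choi Φ := by
      ext ⟨a, p⟩ ⟨b, q⟩
      simp only [idTensor, Matrix.of_apply, choi]
      congr 1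
    rwa [hEq] at this
  · rintro ⟨hCpsd, hCnn⟩ k X ⟨hXpsd, hXnn⟩
    constructor
    · open scoped MatrixOrder in
      obtain ⟨B, hB⟩ := CStarAlgebra.nonneg_iff_eq_star_mul_self.mp hCpsd.nonneg
      rw [idTensor_eq_kraus_sum Φ k X B hB]
      refine Finset.sum_induction _ _ (fun A B hA hB => hA.add hB) ?_ fun t _ => ?_
      · simpa using Matrix.PosSemidef.zero (n := Fin k × Fin m) (R := ℂ)
      · exact hXpsd.mul_mul_conjTranspose_same _
    · rintro ⟨a, p⟩ ⟨b, q⟩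
      rw [nonneg_iff_dnn_entry, idTensor_entry]
      refine Finset.sum_nonneg fun i _ => Finset.sum_nonneg fun j _ => mul_nonneg ?_ ?_
      · exact (nonneg_iff_dnn_entry _).mp (hXnn (a, i) (b, j))
      · exact (nonneg_iff_dnn_entry _).mp (hCnn (i, p) (j, q))
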